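/- For a star graph with E edges of lengths l₁,…,l_E summing to L, Neumann condition at the center and Dirichlet at the boundary vertices, the first eigenvalue k₁² satisfies k₁ ≥ π/(2L), with equality iff E = 1; i.e., the first positive zero of ∑ᵢ cot(k·lᵢ) (star secular function with α₀ = 0) is at least π/(2L). -/

import Mathlib

open Real Set


/-- A function with zero derivative at every point of `Icc a b` is constant there. -/
lemma const_on_Icc {g : ℝ → ℝ} {a b : ℝ}
    (hg : ∀ x ∈ Icc a b, HasDerivAt g 0 x) : ∀ x ∈ Icc a b, g x = g a := by
  have hcont : ContinuousOn g (Icc a b) := fun x hx => (hg x hx).continuousAt.continuousWithinAt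
  exact constant_of_has_deriv_right_zero hcont fun x hx =>
    (hg x (Ico_subset_Icc_self hx)).hasDerivWithinAt

/-- Wronskian identity: `f 0 * (k * cos (k*l)) + f' 0 * sin (k*l) = 0`. -/
lemma wronskian_id {k l : ℝ} {f f' : ℝ → ℝ} (hl : 0 ≤ l)
    (hf : ∀ x ∈ Icc 0 l, HasDerivAt f (f' x) x)
    (hf' : ∀ x ∈ Icc 0 l, HasDerivAt f' (-(k ^ 2) * f x) x)
    (hfl : f l = 0) :
    f 0 * (k * Real.cos (k * l)) + f' 0 * Real.sin (k * l) = 0 := by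
  set W : ℝ → ℝ := fun x => f x * (k * Real.cos (k * (l - x))) + f' x * Real.sin (k * (l - x))
    with hW
  have hWd : ∀ x ∈ Icc 0 l, HasDerivAt W 0 x := by
    intro x hx
    have h1 : HasDerivAt (fun x : ℝ => k * (l - x)) (-k) x := by
      simpa using ((hasDerivAt_id x).const_sub l).const_mul k
    have hcos : HasDerivAt (fun x => Real.cos (k * (l - x)))
        (-Real.sin (k * (l - x)) * (-k)) x := (Real.hasDerivAt_cos _).comp x h1
    have hsin : HasDerivAt (fun x => Real.sin (k * (l - x)))
        (Real.cos (k * (l - x)) * (-k)) x := (Real.hasDerivAt_sin _).comp x h1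
    have := (((hf x hx).mul (hcos.const_mul k)).add ((hf' x hx).mul hsin))
    refine this.congr_deriv ?_
    ring
  have := const_on_Icc hWd l (by simp [hl])
  have hWl : W l = 0 := by simp [hW, hfl]
  have hW0 : W 0 = f 0 * (k * Real.cos (k * l)) + f' 0 * Real.sin (k * l) := by simp [hW]
  rw [← hW0, ← this, hWl]

/-- Uniqueness: zero initial data gives the zero solution. -/
lemma ode_zero {k l : ℝ} {f f' : ℝ → ℝ} (hk : 0 < k)
    (hf : ∀ x ∈ Icc 0 l, HasDerivAt f (f' x) x)
    (hf' : ∀ x ∈ Icc 0 l, HasDerivAt f' (-(k ^ 2) * f x) x)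
    (h0 : f 0 = 0) (h0' : f' 0 = 0) : ∀ x ∈ Icc 0 l, f x = 0 := by
  set En : ℝ → ℝ := fun x => k ^ 2 * f x ^ 2 + f' x ^ 2 with hEn
  have hEd : ∀ x ∈ Icc 0 l, HasDerivAt En 0 x := by
    intro x hx
    have := ((((hf x hx).pow 2).const_mul (k ^ 2)).add ((hf' x hx).pow 2))
    refine this.congr_deriv ?_
    ring
  intro x hx
  have hc := const_on_Icc hEd x hx
  have hE0 : En 0 = 0 := by simp [hEn, h0, h0']
  have hx0 : k ^ 2 * f x ^ 2 + f' x ^ 2 = 0 := by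
    have := hc.trans hE0; simpa [hEn] using this
  have hk2 : (0:ℝ) < k ^ 2 := by positivity
  have h1 : k ^ 2 * f x ^ 2 = 0 := by
    nlinarith [sq_nonneg (f' x), mul_nonneg hk2.le (sq_nonneg (f x))]
  rcases mul_eq_zero.mp h1 with h | h
  · exact absurd h hk2.ne'
  · exact pow_eq_zero_iff two_ne_zero |>.mp h

/-- `k² > 0` is an eigenvalue of the star graph with edge lengths `l`, Neumann
condition at the center and Dirichlet conditions at the boundary vertices, i.e. there
is a nontrivial eigenfunction. -/
def IsStarNeumannEigenvalue (E : ℕ) (l : Fin E → ℝ) (k : ℝ) : Prop :=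
  ∃ f f' : Fin E → ℝ → ℝ, ∃ f₀ : ℝ,
    (∀ i, ∀ x ∈ Icc 0 (l i), HasDerivAt (f i) (f' i x) x) ∧
    (∀ i, ∀ x ∈ Icc 0 (l i), HasDerivAt (f' i) (-(k ^ 2) * f i x) x) ∧
    (∀ i, f i (l i) = 0) ∧
    (∀ i, f i 0 = f₀) ∧
    (∑ i, f' i 0 = 0) ∧
    ¬∀ i, ∀ x ∈ Icc 0 (l i), f i x = 0

lemma star_trivial {E : ℕ} (hE : 1 ≤ E) {l : Fin E → ℝ} {k : ℝ} (hl : ∀ i, 0 < l i)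
    (hk : 0 < k) (hcond : ∀ i, k * l i < π / 2) : ¬ IsStarNeumannEigenvalue E l k := by
  rintro ⟨f, f', f₀, hf, hf', hfl, hf0, hsum, hnt⟩
  haveI : Nonempty (Fin E) := ⟨⟨0, hE⟩⟩
  have hsinpos : ∀ i, 0 < Real.sin (k * l i) := fun i =>
    Real.sin_pos_of_pos_of_lt_pi (mul_pos hk (hl i))
      ((hcond i).trans (by linarith [Real.pi_pos]))
  have hcospos : ∀ i, 0 < Real.cos (k * l i) := fun i =>
    Real.cos_pos_of_mem_Ioo ⟨by nlinarith [Real.pi_pos, mul_pos hk (hl i)], hcond i⟩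
  have key : ∀ i, f' i 0 = -(f₀ * k * (Real.cos (k * l i) / Real.sin (k * l i))) := by
    intro i
    have hw := wronskian_id (hl i).le (hf i) (hf' i) (hfl i)
    rw [hf0 i] at hw
    have hs := (hsinpos i).ne'
    field_simp
    linarith
  have hS : 0 < ∑ i, Real.cos (k * l i) / Real.sin (k * l i) :=
    Finset.sum_pos (fun i _ => div_pos (hcospos i) (hsinpos i)) Finset.univ_nonempty
  have hsum' : ∑ i, f' i 0 = -(f₀ * k) * ∑ i, Real.cos (k * l i) / Real.sin (k * l i) := by
    rw [Finset.mul_sum]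
    exact Finset.sum_congr rfl fun i _ => by rw [key i]; ring
  have hf₀ : f₀ = 0 := by
    rw [hsum'] at hsum
    rcases mul_eq_zero.mp hsum with h | h
    · have : f₀ * k = 0 := by linarith
      rcases mul_eq_zero.mp this with h' | h'
      · exact h'
      · exact absurd h' hk.ne'
    · exact absurd h hS.ne'
  apply hnt
  intro i
  exact ode_zero hk (hf i) (hf' i) (by rw [hf0 i, hf₀]) (by rw [key i, hf₀]; ring)

/-- Among all star graphs of total length `L` (Neumann center, Dirichlet boundary),
the first eigenvalue satisfies `k₁ ≥ π/(2L)`, with equality attained precisely for the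
single interval `E = 1`. -/
theorem star_graph_first_eigenvalue_bound (E : ℕ) (hE : 1 ≤ E) (l : Fin E → ℝ)
    (hl : ∀ i, 0 < l i) (L : ℝ) (hL : ∑ i, l i = L) :
    (∀ k : ℝ, 0 < k → IsStarNeumannEigenvalue E l k → π / (2 * L) ≤ k) ∧
    (IsStarNeumannEigenvalue E l (π / (2 * L)) ↔ E = 1) := by
  haveI : Nonempty (Fin E) := ⟨⟨0, hE⟩⟩
  have hLpos : 0 < L := hL ▸ Finset.sum_pos (fun i _ => hl i) Finset.univ_nonempty
  have hle : ∀ i, l i ≤ L := fun i =>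
    hL ▸ Finset.single_le_sum (fun j _ => (hl j).le) (Finset.mem_univ i)
  constructor
  · intro k hk heig
    by_contra hcon
    push_neg at hcon
    refine star_trivial hE hl hk (fun i => ?_) heig
    have h1 : k * L < π / 2 := by
      rw [lt_div_iff₀ (by positivity : (0:ℝ) < 2 * L)] at hcon
      linarith
    calc k * l i ≤ k * L := by nlinarith [hle i, hl i]
      _ < π / 2 := h1
  · constructor
    · intro heig
      by_contra hE1
      have hE2 : 2 ≤ E := by omega
      haveI : Nontrivial (Fin E) := Fin.nontrivial_iff_two_le.mpr hE2
      have hk0 : 0 < π / (2 * L) := by positivity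
      refine star_trivial hE hl hk0 (fun i => ?_) heig
      obtain ⟨j, hj⟩ := exists_ne i
      have hlt : l i < L := by
        have : l i + l j ≤ ∑ m, l m := by
          have := Finset.add_sum_erase Finset.univ l (Finset.mem_univ i)
          rw [← this]
          have : l j ≤ ∑ m ∈ Finset.univ.erase i, l m :=
            Finset.single_le_sum (fun m _ => (hl m).le)
              (Finset.mem_erase.mpr ⟨hj, Finset.mem_univ j⟩)
          linarith
        rw [hL] at this
        linarith [hl j]
      calc π / (2 * L) * l i < π / (2 * L) * L := by
            exact mul_lt_mul_of_pos_left hlt hk0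
        _ = π / 2 := by field_simp
    · intro hE1
      subst hE1
      have hl0 : l 0 = L := by simpa using hL
      set k := π / (2 * L) with hk
      have hkL : k * L = π / 2 := by rw [hk]; field_simp
      refine ⟨fun _ x => Real.cos (k * x), fun _ x => -k * Real.sin (k * x), 1,
        ?_, ?_, ?_, ?_, ?_, ?_⟩
      · intro i x _
        have h1 : HasDerivAt (fun x : ℝ => k * x) k x := by
          simpa using (hasDerivAt_id x).const_mul k
        have := (Real.hasDerivAt_cos (k * x)).comp x h1
        refine this.congr_deriv ?_
        ring
      · intro i x _
        have h1 : HasDerivAt (fun x : ℝ => k * x) k x := by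
          simpa using (hasDerivAt_id x).const_mul k
        have := ((Real.hasDerivAt_sin (k * x)).comp x h1).const_mul (-k)
        refine this.congr_deriv ?_
        ring
      · intro i
        have hli : l i = L := by rw [Subsingleton.elim i 0, hl0]
        show Real.cos (k * l i) = 0
        rw [hli, hkL, Real.cos_pi_div_two]
      · intro i; simp
      · simp
      · intro hall
        have h0 : (0:ℝ) ∈ Icc 0 (l 0) := ⟨le_refl 0, (hl 0).le⟩
        have := hall 0 0 h0
        simp at this
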